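/- If d is a conditionally negative definite pseudometric on D (symmetric, vanishing on the diagonal), then for any κ > 0 and ν ∈ (0, 1], the powered exponential kernel exp(−κ d(s, t)^ν) is positive semidefinite on D. -/

import Mathlib

open Real Finset Matrix

/-- quadratic form of a PSD matrix is nonneg -/
lemma qf_nonneg {m : ℕ} {M : Matrix (Fin m) (Fin m) ℝ} (h : M.PosSemidef)
    (x : Fin m → ℝ) : 0 ≤ ∑ i, ∑ j, x i * x j * M i j := by
  have := h.dotProduct_mulVec_nonneg x
  simpa [dotProduct, Matrix.mulVec, Finset.mul_sum, mul_comm, mul_left_comm,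
    mul_assoc] using this

lemma posSemidef_of_qf {m : ℕ} {M : Matrix (Fin m) (Fin m) ℝ}
    (hsym : ∀ i j, M i j = M j i)
    (hqf : ∀ x : Fin m → ℝ, 0 ≤ ∑ i, ∑ j, x i * x j * M i j) : M.PosSemidef := by
  apply Matrix.PosSemidef.of_dotProduct_mulVec_nonneg
  · ext i j
    simp [Matrix.conjTranspose_apply, hsym i j]
  · intro x
    have := hqf x
    simpa [dotProduct, Matrix.mulVec, Finset.mul_sum, mul_comm, mul_left_comm,
      mul_assoc] using this

/-- Schur product theorem -/
lemma schur_psd {m : ℕ} {A B : Matrix (Fin m) (Fin m) ℝ}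
    (hA : A.PosSemidef) (hB : B.PosSemidef) :
    (Matrix.of fun i j => A i j * B i j).PosSemidef := by
  obtain ⟨p, v, hv⟩ := Matrix.posSemidef_iff_eq_sum_vecMulVec.mp hA
  obtain ⟨C, hC⟩ : ∃ C : Matrix (Fin p) (Fin m) ℝ, A = Cᴴ * C :=
    ⟨Matrix.of fun k i => v k i, by
      ext i j; simp [hv, Matrix.mul_apply, Matrix.vecMulVec_apply, Matrix.sum_apply]⟩
  have hAe : ∀ i j, A i j = ∑ k, C k i * C k j := by
    intro i j
    rw [hC]
    simp [Matrix.mul_apply, Matrix.conjTranspose_apply]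
  apply posSemidef_of_qf
  · intro i j
    have h1 : A i j = A j i := by
      conv_lhs => rw [← hA.1.apply i j]; simp
    have h2 : B i j = B j i := by
      conv_lhs => rw [← hB.1.apply i j]; simp
    simp [Matrix.of_apply, h1, h2]
  · intro x
    have key : ∑ i, ∑ j, x i * x j * (A i j * B i j)
        = ∑ k, ∑ i, ∑ j, (x i * C k i) * (x j * C k j) * B i j := by
      have step : ∀ i j : Fin m, x i * x j * (A i j * B i j)
          = ∑ k, (x i * C k i) * (x j * C k j) * B i j := by
        intro i j
        rw [hAe i j, Finset.sum_mul, Finset.mul_sum]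
        exact Finset.sum_congr rfl fun k _ => by ring
      simp_rw [step]
      exact Eq.trans (Finset.sum_congr rfl fun i _ => Finset.sum_comm) Finset.sum_comm
    simp only [Matrix.of_apply]
    rw [key]
    exact Finset.sum_nonneg fun k _ => qf_nonneg hB (fun i => x i * C k i)

lemma ones_psd {m : ℕ} : (Matrix.of fun _ _ : Fin m => (1 : ℝ)).PosSemidef := by
  apply posSemidef_of_qf (fun i j => by simp)
  intro x
  have : ∑ i, ∑ j, x i * x j * (Matrix.of fun _ _ : Fin m => (1:ℝ)) i j
      = (∑ i, x i) * (∑ j, x j) := by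
    simp only [Matrix.of_apply, mul_one, Finset.sum_mul, Finset.mul_sum]
    exact Finset.sum_comm
  rw [this]
  exact mul_self_nonneg _

lemma pow_entrywise_psd {m : ℕ} {M : Matrix (Fin m) (Fin m) ℝ} (h : M.PosSemidef) :
    ∀ n : ℕ, (Matrix.of fun i j => (M i j) ^ n).PosSemidef := by
  intro n
  induction n with
  | zero => simpa using ones_psd
  | succ n ih =>
      have e : (Matrix.of fun i j => (M i j) ^ (n+1))
          = Matrix.of fun i j => (Matrix.of fun i j => (M i j) ^ n) i j * M i j := by
        ext i j
        simp [pow_succ]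
      rw [e]
      exact schur_psd ih h

/-- entrywise exponential of a PSD matrix has nonneg quadratic form -/
lemma exp_entrywise_qf_nonneg {m : ℕ} {M : Matrix (Fin m) (Fin m) ℝ}
    (h : M.PosSemidef) (x : Fin m → ℝ) :
    0 ≤ ∑ i, ∑ j, x i * x j * Real.exp (M i j) := by
  have hts : ∀ i j : Fin m, HasSum (fun n : ℕ => (M i j) ^ n / n.factorial)
      (Real.exp (M i j)) := by
    intro i j
    rw [Real.exp_eq_exp_ℝ]
    exact NormedSpace.expSeries_div_hasSum_exp (M i j)
  -- partial sums are nonneg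
  have hpart : ∀ N : ℕ, 0 ≤ ∑ i, ∑ j, x i * x j *
      (∑ n ∈ Finset.range N, (M i j) ^ n / n.factorial) := by
    intro N
    have : ∑ i, ∑ j, x i * x j * (∑ n ∈ Finset.range N, (M i j) ^ n / n.factorial)
        = ∑ n ∈ Finset.range N,
            (∑ i, ∑ j, x i * x j * (M i j) ^ n) / n.factorial := by
      simp_rw [Finset.mul_sum, Finset.sum_div]
      refine Eq.trans (Finset.sum_congr rfl fun i _ =>
        Finset.sum_comm) Finset.sum_comm |>.trans ?_
      refine Finset.sum_congr rfl fun n _ => ?_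
      refine Finset.sum_congr rfl fun i _ => Finset.sum_congr rfl fun j _ => ?_
      rw [mul_div_assoc]
    rw [this]
    refine Finset.sum_nonneg fun n _ => div_nonneg ?_ (Nat.cast_nonneg _)
    have := qf_nonneg (pow_entrywise_psd h n) x
    simpa using this
  -- take limits
  have hlim : Filter.Tendsto (fun N : ℕ => ∑ i, ∑ j, x i * x j *
      (∑ n ∈ Finset.range N, (M i j) ^ n / n.factorial)) Filter.atTop
      (nhds (∑ i, ∑ j, x i * x j * Real.exp (M i j))) := by
    refine tendsto_finset_sum _ fun i _ => tendsto_finset_sum _ fun j _ => ?_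
    exact ((hts i j).tendsto_sum_nat).const_mul _
  exact ge_of_tendsto' hlim hpart

lemma cnd_aux {D : Type*} (d : D → D → ℝ)
    (hsymm : ∀ s t, d s t = d t s)
    (hdiag : ∀ s, d s s = 0)
    (hcnd : ∀ (m : ℕ) (s : Fin m → D) (b : Fin m → ℝ), (∑ i, b i = 0) →
      ∑ i, ∑ j, b i * b j * d (s i) (s j) ≤ 0)
    {n : ℕ} (s : Fin n → D) (p : D) (x : Fin n → ℝ) :
    ∑ i, ∑ j, x i * x j * d (s i) (s j)
      ≤ 2 * (∑ i, x i) * (∑ i, x i * d (s i) p) := by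
  have hb0 : ∑ i : Fin (n+1), Fin.snoc x (-(∑ i, x i)) i = 0 := by
    rw [Fin.sum_univ_castSucc]
    simp
  have key := hcnd (n+1) (Fin.snoc s p) (Fin.snoc x (-(∑ i, x i))) hb0
  simp only [Fin.sum_univ_castSucc, Fin.snoc_castSucc, Fin.snoc_last, hdiag,
    mul_zero, add_zero] at key
  simp_rw [hsymm p] at key
  rw [Finset.sum_add_distrib] at key
  have e1 : ∑ i : Fin n, (x i * -∑ i, x i) * d (s i) p
      = -((∑ i, x i) * ∑ i, x i * d (s i) p) := by
    rw [Finset.sum_congr rfl fun i (_ : i ∈ Finset.univ) =>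
      (show (x i * -∑ j, x j) * d (s i) p = (-∑ j, x j) * (x i * d (s i) p) by ring),
      ← Finset.mul_sum]
    ring
  have e2 : ∑ i : Fin n, (-∑ i, x i) * x i * d (s i) p
      = -((∑ i, x i) * ∑ i, x i * d (s i) p) := by
    rw [Finset.sum_congr rfl fun i (_ : i ∈ Finset.univ) =>
      (show (-∑ j, x j) * x i * d (s i) p = (-∑ j, x j) * (x i * d (s i) p) by ring),
      ← Finset.mul_sum]
    ring
  rw [e1, e2] at key
  linarith


lemma schoenberg {D : Type*} (d : D → D → ℝ)
    (hsymm : ∀ s t, d s t = d t s)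
    (hdiag : ∀ s, d s s = 0)
    (hcnd : ∀ (m : ℕ) (s : Fin m → D) (b : Fin m → ℝ), (∑ i, b i = 0) →
      ∑ i, ∑ j, b i * b j * d (s i) (s j) ≤ 0)
    (t : ℝ) (ht : 0 ≤ t) :
    ∀ (m : ℕ) (s : Fin m → D) (a : Fin m → ℝ),
      0 ≤ ∑ i, ∑ j, a i * a j * Real.exp (-(t * d (s i) (s j))) := by
  intro m s a
  cases m with
  | zero => simp
  | succ m =>
    set ψ : Matrix (Fin (m+1)) (Fin (m+1)) ℝ := Matrix.of fun i j =>
      t * d (s i) (s 0) + t * d (s j) (s 0) - t * d (s i) (s j) with hψdef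
    have hψ : ψ.PosSemidef := by
      apply posSemidef_of_qf
      · intro i j
        simp only [hψdef, Matrix.of_apply]
        rw [hsymm (s i) (s j)]
        ring
      · intro x
        have key := cnd_aux d hsymm hdiag hcnd s (s 0) x
        have expand : ∑ i, ∑ j, x i * x j * ψ i j
            = t * ((2 * ∑ i, x i) * (∑ i, x i * d (s i) (s 0))
              - ∑ i, ∑ j, x i * x j * d (s i) (s j)) := by
          simp only [hψdef, Matrix.of_apply]
          have step : ∀ i j : Fin (m+1), x i * x j *
              (t * d (s i) (s 0) + t * d (s j) (s 0) - t * d (s i) (s j))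
              = t * ((x i * d (s i) (s 0)) * x j) + t * (x i * (x j * d (s j) (s 0)))
                - t * (x i * x j * d (s i) (s j)) := fun i j => by ring
          simp_rw [step, Finset.sum_sub_distrib, Finset.sum_add_distrib,
            ← Finset.mul_sum, ← Finset.sum_mul]
          ring
        rw [expand]
        have := sub_nonneg.mpr key
        positivity
    have hexp := exp_entrywise_qf_nonneg hψ
      (fun i => a i * Real.exp (-(t * d (s i) (s 0))))
    have term : ∀ i j : Fin (m+1),
        (a i * Real.exp (-(t * d (s i) (s 0)))) * (a j * Real.exp (-(t * d (s j) (s 0))))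
          * Real.exp (ψ i j) = a i * a j * Real.exp (-(t * d (s i) (s j))) := by
      intro i j
      have e : Real.exp (-(t * d (s i) (s 0))) * Real.exp (-(t * d (s j) (s 0)))
          * Real.exp (ψ i j) = Real.exp (-(t * d (s i) (s j))) := by
        rw [← Real.exp_add, ← Real.exp_add]
        congr 1
        simp only [hψdef, Matrix.of_apply]
        ring
      calc (a i * Real.exp (-(t * d (s i) (s 0)))) * (a j * Real.exp (-(t * d (s j) (s 0))))
          * Real.exp (ψ i j)
          = a i * a j * (Real.exp (-(t * d (s i) (s 0))) * Real.exp (-(t * d (s j) (s 0)))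
              * Real.exp (ψ i j)) := by ring
        _ = a i * a j * Real.exp (-(t * d (s i) (s j))) := by rw [e]
    simp_rw [term] at hexp
    exact hexp

open MeasureTheory in
lemma g_cont {ν : ℝ} : ContinuousOn
    (fun u : ℝ => (1 - Real.exp (-u)) * u ^ (-1 - ν)) (Set.Ioi 0) := by
  apply ContinuousOn.mul
  · exact (continuous_const.sub (Real.continuous_exp.comp continuous_neg)).continuousOn
  · intro u hu
    exact (Real.continuousAt_rpow_const u _ (Or.inl (ne_of_gt hu))).continuousWithinAt

open MeasureTheory in
lemma g_integrable {ν : ℝ} (hν0 : 0 < ν) (hν1 : ν < 1) :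
    IntegrableOn (fun u : ℝ => (1 - Real.exp (-u)) * u ^ (-1 - ν)) (Set.Ioi 0) := by
  rw [← Set.Ioc_union_Ioi_eq_Ioi (zero_le_one (α := ℝ))]
  apply IntegrableOn.union
  · -- on (0, 1], dominate by u ^ (-ν)
    have hg1 : IntegrableOn (fun u : ℝ => u ^ (-ν)) (Set.Ioc 0 1) := by
      rw [← intervalIntegrable_iff_integrableOn_Ioc_of_le zero_le_one]
      exact intervalIntegral.intervalIntegrable_rpow' (by linarith)
    refine Integrable.mono' hg1 ((g_cont.mono Set.Ioc_subset_Ioi_self).aestronglyMeasurable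
      measurableSet_Ioc) ?_
    filter_upwards [ae_restrict_mem measurableSet_Ioc] with u hu
    have hu0 : 0 < u := hu.1
    have h1 : 0 ≤ 1 - Real.exp (-u) := by
      have : Real.exp (-u) ≤ 1 := Real.exp_le_one_iff.mpr (by linarith)
      linarith
    rw [Real.norm_eq_abs, abs_of_nonneg (mul_nonneg h1 (Real.rpow_nonneg hu0.le _))]
    have h2 : 1 - Real.exp (-u) ≤ u := by
      have := Real.add_one_le_exp (-u)
      linarith
    calc (1 - Real.exp (-u)) * u ^ (-1 - ν) ≤ u * u ^ (-1 - ν) :=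
          mul_le_mul_of_nonneg_right h2 (Real.rpow_nonneg hu0.le _)
      _ = u ^ (-ν) := by
          rw [show u * u ^ (-1 - ν) = u ^ (1:ℝ) * u ^ (-1 - ν) by rw [Real.rpow_one],
            ← Real.rpow_add hu0]
          congr 1
          ring
  · -- on (1, ∞), dominate by u ^ (-1 - ν)
    have hg2 : IntegrableOn (fun u : ℝ => u ^ (-1 - ν)) (Set.Ioi 1) :=
      integrableOn_Ioi_rpow_of_lt (by linarith) zero_lt_one
    refine Integrable.mono' hg2 (((g_cont (ν := ν)).mono fun u (hu : (1:ℝ) < u) =>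
      show (0:ℝ) < u from lt_trans zero_lt_one hu).aestronglyMeasurable measurableSet_Ioi) ?_
    filter_upwards [ae_restrict_mem measurableSet_Ioi] with u hu
    have hu0 : (0:ℝ) < u := lt_trans zero_lt_one hu
    have h1 : 0 ≤ 1 - Real.exp (-u) := by
      have : Real.exp (-u) ≤ 1 := Real.exp_le_one_iff.mpr (by linarith)
      linarith
    rw [Real.norm_eq_abs, abs_of_nonneg (mul_nonneg h1 (Real.rpow_nonneg hu0.le _))]
    have h2 : 1 - Real.exp (-u) ≤ 1 := by
      have := Real.exp_pos (-u)
      linarith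
    calc (1 - Real.exp (-u)) * u ^ (-1 - ν) ≤ 1 * u ^ (-1 - ν) :=
          mul_le_mul_of_nonneg_right h2 (Real.rpow_nonneg hu0.le _)
      _ = u ^ (-1 - ν) := one_mul _

open MeasureTheory in
lemma c_pos {ν : ℝ} (hν0 : 0 < ν) (hν1 : ν < 1) :
    0 < ∫ u in Set.Ioi (0:ℝ), (1 - Real.exp (-u)) * u ^ (-1 - ν) := by
  rw [setIntegral_pos_iff_support_of_nonneg_ae ?h1 (g_integrable hν0 hν1)]
  case h1 =>
    filter_upwards [ae_restrict_mem measurableSet_Ioi] with u hu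
    have : Real.exp (-u) ≤ 1 := Real.exp_le_one_iff.mpr (by simp at hu ⊢; linarith)
    exact mul_nonneg (by linarith) (Real.rpow_nonneg (le_of_lt hu) _)
  refine lt_of_lt_of_le ?_ (measure_mono (s := Set.Ioi (0:ℝ)) fun u hu => ?_)
  · rw [Real.volume_Ioi]
    exact ENNReal.zero_lt_top
  · have hu0 : (0:ℝ) < u := hu
    have h1 : 0 < 1 - Real.exp (-u) := by
      have : Real.exp (-u) < 1 := Real.exp_lt_one_iff.mpr (by linarith)
      linarith
    exact ⟨ne_of_gt (mul_pos h1 (Real.rpow_pos_of_pos hu0 _)), hu⟩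

open MeasureTheory in
lemma scale_integral {ν : ℝ} (hν0 : 0 < ν) (hν1 : ν < 1) (x : ℝ) (hx : 0 ≤ x) :
    ∫ u in Set.Ioi (0:ℝ), (1 - Real.exp (-(u * x))) * u ^ (-1 - ν)
      = x ^ ν * ∫ u in Set.Ioi (0:ℝ), (1 - Real.exp (-u)) * u ^ (-1 - ν) := by
  rcases eq_or_lt_of_le hx with h0 | hx
  · rw [← h0]
    simp [Real.zero_rpow hν0.ne']
  · have hxpow : x ^ (1 + ν) * x ^ (-1 - ν) = 1 := by
      rw [← Real.rpow_add hx, show (1 + ν) + (-1 - ν) = 0 by ring, Real.rpow_zero]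
    have e1 : ∫ u in Set.Ioi (0:ℝ), (1 - Real.exp (-(u * x))) * u ^ (-1 - ν)
        = ∫ u in Set.Ioi (0:ℝ),
            x ^ (1 + ν) * ((1 - Real.exp (-(u * x))) * (u * x) ^ (-1 - ν)) := by
      refine setIntegral_congr_fun measurableSet_Ioi fun u hu => ?_
      have hu0 : (0:ℝ) < u := hu
      rw [Real.mul_rpow hu0.le hx.le]
      calc (1 - Real.exp (-(u * x))) * u ^ (-1 - ν)
          = (x ^ (1 + ν) * x ^ (-1 - ν)) * ((1 - Real.exp (-(u * x))) * u ^ (-1 - ν)) := by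
            rw [hxpow, one_mul]
        _ = x ^ (1 + ν) * ((1 - Real.exp (-(u * x))) * (u ^ (-1 - ν) * x ^ (-1 - ν))) := by
            ring
    rw [e1, integral_const_mul,
      integral_comp_mul_right_Ioi (fun u => (1 - Real.exp (-u)) * u ^ (-1 - ν)) 0 hx,
      zero_mul, smul_eq_mul, ← mul_assoc]
    congr 1
    rw [show x⁻¹ = x ^ (-1 : ℝ) by rw [Real.rpow_neg_one], ← Real.rpow_add hx]
    congr 1
    ring

open MeasureTheory in
lemma scale_integrable {ν : ℝ} (hν0 : 0 < ν) (hν1 : ν < 1) (x : ℝ) (hx : 0 ≤ x) :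
    IntegrableOn (fun u : ℝ => (1 - Real.exp (-(u * x))) * u ^ (-1 - ν)) (Set.Ioi 0) := by
  rcases eq_or_lt_of_le hx with h0 | hx
  · have : (fun u : ℝ => (1 - Real.exp (-(u * x))) * u ^ (-1 - ν)) = fun _ => 0 := by
      funext u
      rw [← h0]
      simp
    rw [this]
    exact integrableOn_zero
  · have hbase : IntegrableOn
        (fun u : ℝ => (1 - Real.exp (-(u * x))) * (u * x) ^ (-1 - ν)) (Set.Ioi 0) := by
      have := (integrableOn_Ioi_comp_mul_right_iff
        (fun u : ℝ => (1 - Real.exp (-u)) * u ^ (-1 - ν)) 0 hx).mpr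
      rw [zero_mul] at this
      exact this (g_integrable hν0 hν1)
    have := hbase.const_mul (x ^ (1 + ν))
    refine MeasureTheory.IntegrableOn.congr_fun this (fun u hu => ?_) measurableSet_Ioi
    have hu0 : (0:ℝ) < u := hu
    have hxpow : x ^ (1 + ν) * x ^ (-1 - ν) = 1 := by
      rw [← Real.rpow_add hx, show (1 + ν) + (-1 - ν) = 0 by ring, Real.rpow_zero]
    rw [Real.mul_rpow hu0.le hx.le]
    calc x ^ (1 + ν) * ((1 - Real.exp (-(u * x))) * (u ^ (-1 - ν) * x ^ (-1 - ν)))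
        = (x ^ (1 + ν) * x ^ (-1 - ν)) * ((1 - Real.exp (-(u * x))) * u ^ (-1 - ν)) := by ring
      _ = (1 - Real.exp (-(u * x))) * u ^ (-1 - ν) := by rw [hxpow, one_mul]

open MeasureTheory in
lemma cnd_rpow {D : Type*} (d : D → D → ℝ)
    (hnonneg : ∀ s t, 0 ≤ d s t)
    (hsymm : ∀ s t, d s t = d t s)
    (hdiag : ∀ s, d s s = 0)
    (hcnd : ∀ (m : ℕ) (s : Fin m → D) (b : Fin m → ℝ), (∑ i, b i = 0) →
      ∑ i, ∑ j, b i * b j * d (s i) (s j) ≤ 0)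
    {ν : ℝ} (hν0 : 0 < ν) (hν1 : ν < 1) :
    ∀ (m : ℕ) (s : Fin m → D) (b : Fin m → ℝ), (∑ i, b i = 0) →
      ∑ i, ∑ j, b i * b j * (d (s i) (s j)) ^ ν ≤ 0 := by
  intro m s b hb
  set c := ∫ u in Set.Ioi (0:ℝ), (1 - Real.exp (-u)) * u ^ (-1 - ν) with hc
  have hcpos : 0 < c := c_pos hν0 hν1
  have hSI : ∀ i j : Fin m, (d (s i) (s j)) ^ ν * c
      = ∫ u in Set.Ioi (0:ℝ), (1 - Real.exp (-(u * d (s i) (s j)))) * u ^ (-1 - ν) :=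
    fun i j => (scale_integral hν0 hν1 _ (hnonneg _ _)).symm
  have hInt : ∀ i j : Fin m, Integrable
      (fun u : ℝ => b i * b j *
        ((1 - Real.exp (-(u * d (s i) (s j)))) * u ^ (-1 - ν)))
      (volume.restrict (Set.Ioi 0)) :=
    fun i j => (scale_integrable hν0 hν1 _ (hnonneg _ _)).const_mul _
  have key : (∑ i, ∑ j, b i * b j * (d (s i) (s j)) ^ ν) * c
      = ∫ u in Set.Ioi (0:ℝ), ∑ i, ∑ j, b i * b j *
          ((1 - Real.exp (-(u * d (s i) (s j)))) * u ^ (-1 - ν)) := by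
    rw [Finset.sum_mul,
      integral_finset_sum Finset.univ (fun i _ => integrable_finset_sum _ (fun j _ => hInt i j))]
    refine Finset.sum_congr rfl fun i _ => ?_
    rw [Finset.sum_mul, integral_finset_sum Finset.univ (fun j _ => hInt i j)]
    refine Finset.sum_congr rfl fun j _ => ?_
    rw [mul_assoc, hSI i j]
    exact (integral_const_mul _ _).symm
  have hneg : ∫ u in Set.Ioi (0:ℝ), ∑ i, ∑ j, b i * b j *
      ((1 - Real.exp (-(u * d (s i) (s j)))) * u ^ (-1 - ν)) ≤ 0 := by
    refine setIntegral_nonpos measurableSet_Ioi fun u hu => ?_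
    have hu0 : (0:ℝ) < u := hu
    have hpow : (0:ℝ) ≤ u ^ (-1 - ν) := Real.rpow_nonneg hu0.le _
    have hsum0 : ∑ i, ∑ j, b i * b j = 0 := by
      rw [← Finset.sum_mul_sum, hb, zero_mul]
    have hexp := schoenberg d hsymm hdiag hcnd u hu0.le m s b
    have step : ∀ i j : Fin m, b i * b j *
        ((1 - Real.exp (-(u * d (s i) (s j)))) * u ^ (-1 - ν))
        = u ^ (-1 - ν) * (b i * b j)
          - u ^ (-1 - ν) * (b i * b j * Real.exp (-(u * d (s i) (s j)))) :=
      fun i j => by ring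
    have expand : ∑ i, ∑ j, b i * b j *
        ((1 - Real.exp (-(u * d (s i) (s j)))) * u ^ (-1 - ν))
        = u ^ (-1 - ν) * (∑ i, ∑ j, b i * b j)
          - u ^ (-1 - ν) * ∑ i, ∑ j, b i * b j * Real.exp (-(u * d (s i) (s j))) := by
      simp_rw [step, Finset.sum_sub_distrib, ← Finset.mul_sum]
    rw [expand, hsum0, mul_zero, zero_sub]
    have : 0 ≤ u ^ (-1 - ν) * (∑ i, ∑ j, b i * b j * Real.exp (-(u * d (s i) (s j)))) :=
      mul_nonneg hpow hexp
    linarith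
  nlinarith [key, hneg, hcpos]

/-- If `d` is a CND pseudometric (symmetric, vanishing on the diagonal,
nonnegative), then the powered exponential kernel `exp(−κ d(s,t)^ν)` is
positive semidefinite for any `κ > 0` and `ν ∈ (0, 1]`. -/
theorem pexp_kernel_psd {D : Type*} (d : D → D → ℝ)
    (hnonneg : ∀ s t, 0 ≤ d s t)
    (hsymm : ∀ s t, d s t = d t s)
    (hdiag : ∀ s, d s s = 0)
    (hcnd : ∀ (m : ℕ) (s : Fin m → D) (b : Fin m → ℝ), (∑ i, b i = 0) →
      ∑ i, ∑ j, b i * b j * d (s i) (s j) ≤ 0)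
    (κ ν : ℝ) (hκ : 0 < κ) (hν0 : 0 < ν) (hν1 : ν ≤ 1) :
    ∀ (m : ℕ) (s : Fin m → D) (a : Fin m → ℝ),
      0 ≤ ∑ i, ∑ j, a i * a j * Real.exp (-κ * (d (s i) (s j)) ^ ν) := by
  intro m s a
  rcases eq_or_lt_of_le hν1 with h1 | h1
  · -- ν = 1
    subst h1
    simp_rw [Real.rpow_one, neg_mul]
    exact schoenberg d hsymm hdiag hcnd κ hκ.le m s a
  · -- ν < 1 : use d ^ ν which is again CND
    have hsymm' : ∀ s t : D, d s t ^ ν = d t s ^ ν := fun s t => by rw [hsymm]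
    have hdiag' : ∀ s : D, d s s ^ ν = 0 := fun s => by
      rw [hdiag, Real.zero_rpow hν0.ne']
    have hcnd' := cnd_rpow d hnonneg hsymm hdiag hcnd hν0 h1
    simp_rw [neg_mul]
    exact schoenberg (fun s t => d s t ^ ν) hsymm' hdiag' hcnd' κ hκ.le m s a
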